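/- Let Q be a closed convex subset of EuclideanSpace ℝ (Fin N), let p : Fin n → EuclideanSpace ℝ (Fin N) be a configuration that is collision-free in Q with radii ρ : Fin n → ℝ, where 0 ≤ ρ i for all i. Let P i be the power cells of (Q, p, ρ) and F i the free subcells. If q : Fin n → EuclideanSpace ℝ (Fin N) satisfies q i ∈ F i for every i, then q is also collision-free in Q with radii ρ. -/

import Mathlib

open Metric Set

/-- The power cell of index `i` for environment `Q`, points `p` and weights `w`. -/
def powerCell {N n : ℕ} (Q : Set (EuclideanSpace ℝ (Fin N)))
    (p : Fin n → EuclideanSpace ℝ (Fin N)) (w : Fin n → ℝ) (i : Fin n) :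
    Set (EuclideanSpace ℝ (Fin N)) :=
  {q ∈ Q | ∀ j, ‖q - p i‖ ^ 2 - (w i) ^ 2 ≤ ‖q - p j‖ ^ 2 - (w j) ^ 2}

/-- A configuration `p` with radii `ρ` is collision free in `Q`. -/
def CollisionFree {N n : ℕ} (Q : Set (EuclideanSpace ℝ (Fin N)))
    (p : Fin n → EuclideanSpace ℝ (Fin N)) (ρ : Fin n → ℝ) : Prop :=
  (∀ i j, i ≠ j → ρ i + ρ j < ‖p i - p j‖) ∧
    ∀ i, Metric.closedBall (p i) (ρ i) ⊆ interior Q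

/-- The free subcell of index `i`: the erosion of the power cell `P i` by the closed
ball of radius `ρ i`. -/
def freeSubcell {N n : ℕ} (Q : Set (EuclideanSpace ℝ (Fin N)))
    (p : Fin n → EuclideanSpace ℝ (Fin N)) (ρ : Fin n → ℝ) (i : Fin n) :
    Set (EuclideanSpace ℝ (Fin N)) :=
  {x ∈ powerCell Q p ρ i | ρ i < Metric.infDist x (frontier (powerCell Q p ρ i))}

lemma isClosed_powerCell {N n : ℕ} (Q : Set (EuclideanSpace ℝ (Fin N))) (hQc : IsClosed Q)
    (p : Fin n → EuclideanSpace ℝ (Fin N)) (w : Fin n → ℝ) (i : Fin n) :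
    IsClosed (powerCell Q p w i) := by
  have : powerCell Q p w i =
      Q ∩ ⋂ j, {x | ‖x - p i‖ ^ 2 - (w i) ^ 2 ≤ ‖x - p j‖ ^ 2 - (w j) ^ 2} := by
    ext x; simp [powerCell, Set.mem_iInter]
  rw [this]
  refine hQc.inter (isClosed_iInter fun j => isClosed_le ?_ ?_) <;>
    exact (((continuous_id.sub continuous_const).norm.pow 2).sub continuous_const)

lemma closedBall_subset_interior {E : Type*} [NormedAddCommGroup E] [NormedSpace ℝ E]
    {S : Set E} (hS : IsClosed S) {x : E} {r : ℝ} (hx : x ∈ S) (hr0 : 0 ≤ r)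
    (hr : r < Metric.infDist x (frontier S)) :
    Metric.closedBall x r ⊆ interior S := by
  have hdisj : ∀ y ∈ Metric.closedBall x r, y ∉ frontier S := by
    intro y hy hyf
    have h1 : Metric.infDist x (frontier S) ≤ dist x y := Metric.infDist_le_dist_of_mem hyf
    have h2 : dist x y ≤ r := Metric.mem_closedBall'.mp hy
    linarith
  have hxint : x ∈ interior S := by
    have hxf : x ∉ frontier S := hdisj x (Metric.mem_closedBall_self hr0)
    have : x ∈ closure S := subset_closure hx
    by_contra h
    exact hxf ⟨this, h⟩
  have hsub : Metric.closedBall x r ⊆ interior S ∪ (closure S)ᶜ := by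
    intro y hy
    by_cases h1 : y ∈ interior S
    · exact Or.inl h1
    · refine Or.inr fun h2 => hdisj y hy ⟨h2, h1⟩
  exact (convex_closedBall x r).isPreconnected.subset_left_of_subset_union
    isOpen_interior isClosed_closure.isOpen_compl
    (disjoint_compl_right.mono_left interior_subset_closure) hsub
    ⟨x, Metric.mem_closedBall_self hr0, hxint⟩

lemma margin_lemma {E : Type*} [NormedAddCommGroup E] [InnerProductSpace ℝ E]
    {a b x : E} {c r : ℝ} (hab : a ≠ b) (hr : 0 ≤ r)
    (h : ∀ z ∈ Metric.closedBall x r, c ≤ 2 * (inner ℝ z (a - b) : ℝ)) :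
    c + 2 * r * ‖a - b‖ ≤ 2 * (inner ℝ x (a - b) : ℝ) := by
  have hab0 : ‖a - b‖ ≠ 0 := by
    simpa [sub_eq_zero] using hab
  have habpos : (0:ℝ) < ‖a - b‖ := lt_of_le_of_ne (norm_nonneg _) (Ne.symm hab0)
  set u := (r / ‖a - b‖) • (a - b) with hu
  have hz : x - u ∈ Metric.closedBall x r := by
    rw [Metric.mem_closedBall, dist_eq_norm]
    have : x - u - x = -u := by abel
    rw [this, norm_neg, hu, norm_smul, Real.norm_eq_abs,
      abs_of_nonneg (div_nonneg hr (norm_nonneg _))]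
    field_simp
    exact le_rfl
  have hkey := h _ hz
  rw [inner_sub_left, real_inner_smul_left, real_inner_self_eq_norm_sq] at hkey
  have : r / ‖a - b‖ * ‖a - b‖ ^ 2 = r * ‖a - b‖ := by
    field_simp
  rw [this] at hkey
  linarith

/-- Any configuration obtained by placing each robot inside its free subcell is
collision free. -/
theorem collisionFree_of_mem_freeSubcell {N n : ℕ}
    (Q : Set (EuclideanSpace ℝ (Fin N))) (hQc : IsClosed Q) (hQconv : Convex ℝ Q)
    (p : Fin n → EuclideanSpace ℝ (Fin N)) (ρ : Fin n → ℝ)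
    (hρ : ∀ i, 0 ≤ ρ i) (hp : CollisionFree Q p ρ)
    (q : Fin n → EuclideanSpace ℝ (Fin N))
    (hq : ∀ i, q i ∈ freeSubcell Q p ρ i) :
    CollisionFree Q q ρ := by
  have hPc : ∀ i, IsClosed (powerCell Q p ρ i) := isClosed_powerCell Q hQc p ρ
  -- for each i, a slightly enlarged ball around q i sits inside the power cell
  have hball : ∀ i, Metric.closedBall (q i)
      ((ρ i + Metric.infDist (q i) (frontier (powerCell Q p ρ i))) / 2)
      ⊆ powerCell Q p ρ i := by
    intro i
    obtain ⟨hqi, hd⟩ := hq i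
    refine subset_trans (closedBall_subset_interior (hPc i) hqi ?_ ?_) interior_subset
    · linarith [hρ i]
    · linarith
  constructor
  · intro i j hij
    have hsep := hp.1 i j hij
    have hpij : p i ≠ p j := by
      intro h
      rw [h, sub_self, norm_zero] at hsep
      linarith [hρ i, hρ j]
    have hdpos : (0:ℝ) < ‖p i - p j‖ := by
      rw [norm_sub_pos_iff]; exact hpij
    obtain ⟨hqi, hdi⟩ := hq i
    obtain ⟨hqj, hdj⟩ := hq j
    set ri := (ρ i + Metric.infDist (q i) (frontier (powerCell Q p ρ i))) / 2 with hri
    set rj := (ρ j + Metric.infDist (q j) (frontier (powerCell Q p ρ j))) / 2 with hrj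
    have hri1 : ρ i < ri := by rw [hri]; linarith
    have hrj1 : ρ j < rj := by rw [hrj]; linarith
    have hri0 : 0 ≤ ri := le_trans (hρ i) hri1.le
    have hrj0 : 0 ≤ rj := le_trans (hρ j) hrj1.le
    -- margin for i
    have hAi : ∀ z ∈ Metric.closedBall (q i) ri,
        (ρ j ^ 2 - ρ i ^ 2 - ‖p j‖ ^ 2 + ‖p i‖ ^ 2) ≤ 2 * (inner ℝ z (p i - p j) : ℝ) := by
      intro z hz
      have hzP := hball i hz
      have hineq := hzP.2 j
      have e1 : ‖z - p i‖ ^ 2 = ‖z‖ ^ 2 - 2 * (inner ℝ z (p i) : ℝ) + ‖p i‖ ^ 2 :=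
        norm_sub_sq_real z (p i)
      have e2 : ‖z - p j‖ ^ 2 = ‖z‖ ^ 2 - 2 * (inner ℝ z (p j) : ℝ) + ‖p j‖ ^ 2 :=
        norm_sub_sq_real z (p j)
      have e3 : (inner ℝ z (p i - p j) : ℝ) = inner ℝ z (p i) - inner ℝ z (p j) :=
        inner_sub_right z (p i) (p j)
      linarith
    have hAj : ∀ z ∈ Metric.closedBall (q j) rj,
        (ρ i ^ 2 - ρ j ^ 2 - ‖p i‖ ^ 2 + ‖p j‖ ^ 2) ≤ 2 * (inner ℝ z (p j - p i) : ℝ) := by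
      intro z hz
      have hzP := hball j hz
      have hineq := hzP.2 i
      have e1 : ‖z - p i‖ ^ 2 = ‖z‖ ^ 2 - 2 * (inner ℝ z (p i) : ℝ) + ‖p i‖ ^ 2 :=
        norm_sub_sq_real z (p i)
      have e2 : ‖z - p j‖ ^ 2 = ‖z‖ ^ 2 - 2 * (inner ℝ z (p j) : ℝ) + ‖p j‖ ^ 2 :=
        norm_sub_sq_real z (p j)
      have e3 : (inner ℝ z (p j - p i) : ℝ) = inner ℝ z (p j) - inner ℝ z (p i) :=
        inner_sub_right z (p j) (p i)
      linarith
    have hMi := margin_lemma hpij hri0 hAi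
    have hMj := margin_lemma (Ne.symm hpij) hrj0 hAj
    have hrev : ‖p j - p i‖ = ‖p i - p j‖ := norm_sub_rev _ _
    rw [hrev] at hMj
    have eqi : (inner ℝ (q i - q j) (p i - p j) : ℝ)
        = inner ℝ (q i) (p i - p j) - inner ℝ (q j) (p i - p j) :=
      inner_sub_left (q i) (q j) (p i - p j)
    have eqj : (inner ℝ (q j) (p j - p i) : ℝ) = -(inner ℝ (q j) (p i - p j) : ℝ) := by
      rw [show p j - p i = -(p i - p j) by abel, inner_neg_right]
    rw [eqj] at hMj
    have hCS : (inner ℝ (q i - q j) (p i - p j) : ℝ) ≤ ‖q i - q j‖ * ‖p i - p j‖ :=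
      real_inner_le_norm _ _
    -- combine
    have hsum : 2 * (ri + rj) * ‖p i - p j‖ ≤ 2 * (‖q i - q j‖ * ‖p i - p j‖) := by
      nlinarith [hCS, hMi, hMj, eqi]
    have hfin : ri + rj ≤ ‖q i - q j‖ := by
      have := (mul_le_mul_iff_left₀ hdpos).mp (by nlinarith : (ri + rj) * ‖p i - p j‖ ≤ ‖q i - q j‖ * ‖p i - p j‖)
      exact this
    linarith
  · intro i
    obtain ⟨hqi, hd⟩ := hq i
    refine subset_trans (closedBall_subset_interior (hPc i) hqi (hρ i) hd) ?_
    exact interior_mono (fun x hx => hx.1)
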